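/- Let A be a real symmetric n×n matrix with eigenvalues λ₁ ≤ λ₂ ≤ ⋯ ≤ λₙ and let f(x) = (1/2) x^T A x. Every point x* ∈ S^{n-1} satisfying the first and second order necessary optimality conditions for minimizing f on the sphere also satisfies the second order sufficient condition if and only if the smallest eigenvalue λ₁ of A is simple. -/

import Mathlib

open Matrix

/-- For `f(x) = (1/2)xᵀAx` with `A` real symmetric with smallest eigenvalue `λ₁`:
every point of the unit sphere satisfying the first and second order necessary
optimality conditions also satisfies the second order sufficient condition
if and only if `λ₁` is a simple eigenvalue. -/
theorem stmt8 (n : ℕ) (A : Matrix (Fin n) (Fin n) ℝ) (hA : A.IsSymm) (lam1 : ℝ)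
    (hmem : ∃ v : Fin n → ℝ, v ⬝ᵥ v = 1 ∧ A.mulVec v = lam1 • v)
    (hmin : ∀ (μ : ℝ) (v : Fin n → ℝ), v ≠ 0 → A.mulVec v = μ • v → lam1 ≤ μ) :
    (∀ (x : Fin n → ℝ) (lam : ℝ), x ⬝ᵥ x = 1 → A.mulVec x = lam • x →
        (∀ u : Fin n → ℝ, u ⬝ᵥ u = 1 → u ⬝ᵥ x = 0 → lam ≤ u ⬝ᵥ A.mulVec u) →
        (∀ u : Fin n → ℝ, u ⬝ᵥ u = 1 → u ⬝ᵥ x = 0 → lam < u ⬝ᵥ A.mulVec u))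
      ↔ Module.finrank ℝ
          (LinearMap.ker (Matrix.toLin' A - lam1 • LinearMap.id)) = 1 := by
  classical
  have hHerm : A.IsHermitian := by
    rw [Matrix.IsHermitian, conjTranspose_eq_transpose_of_trivial]; exact hA
  set B : Matrix (Fin n) (Fin n) ℝ := A - lam1 • 1 with hBdef
  have hBmul : ∀ w : Fin n → ℝ, B *ᵥ w = A *ᵥ w - lam1 • w := by
    intro w
    simp [hBdef, sub_mulVec, smul_mulVec, one_mulVec]
  have hBHerm : B.IsHermitian := by
    rw [Matrix.IsHermitian, conjTranspose_eq_transpose_of_trivial]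
    simp [hBdef, Matrix.transpose_sub, hA.eq, Matrix.transpose_smul]
  have hpsd : B.PosSemidef := by
    refine hBHerm.posSemidef_iff_eigenvalues_nonneg.mpr (fun i => ?_ : ∀ i, 0 ≤ hBHerm.eigenvalues i)
    have hv := hBHerm.mulVec_eigenvectorBasis i
    set w : Fin n → ℝ := ⇑(hBHerm.eigenvectorBasis i) with hw
    have hw0 : w ≠ 0 := by
      intro h
      exact hBHerm.eigenvectorBasis.orthonormal.ne_zero i (by ext j; exact congrFun h j)
    have hAw : A *ᵥ w = (hBHerm.eigenvalues i + lam1) • w := by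
      have h := hBmul w
      rw [hv] at h
      rw [eq_sub_iff_add_eq] at h
      rw [add_smul]
      exact h.symm
    have hge := hmin (hBHerm.eigenvalues i + lam1) w hw0 hAw
    linarith
  have hray : ∀ u : Fin n → ℝ, lam1 * (u ⬝ᵥ u) ≤ u ⬝ᵥ A *ᵥ u := by
    intro u
    have h := hpsd.dotProduct_mulVec_nonneg u
    rw [show star u = u from star_trivial u, hBmul u, dotProduct_sub,
      dotProduct_smul, smul_eq_mul] at h
    linarith
  have heq0 : ∀ u : Fin n → ℝ, u ⬝ᵥ A *ᵥ u = lam1 * (u ⬝ᵥ u) → A *ᵥ u = lam1 • u := by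
    intro u h
    have h0 : star u ⬝ᵥ B *ᵥ u = 0 := by
      rw [show star u = u from star_trivial u, hBmul u, dotProduct_sub,
        dotProduct_smul, smul_eq_mul, h, sub_self]
    have := (hpsd.dotProduct_mulVec_zero_iff u).mp h0
    rw [hBmul u, sub_eq_zero] at this
    exact this
  have hker : ∀ w : Fin n → ℝ,
      w ∈ LinearMap.ker (Matrix.toLin' A - lam1 • LinearMap.id) ↔ A *ᵥ w = lam1 • w := by
    intro w
    simp [LinearMap.mem_ker, LinearMap.sub_apply, LinearMap.smul_apply,
      Matrix.toLin'_apply, sub_eq_zero]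
  obtain ⟨v, hv1, hvA⟩ := hmem
  have hv0 : v ≠ 0 := by intro h; rw [h] at hv1; simp at hv1
  set K := LinearMap.ker (Matrix.toLin' A - lam1 • LinearMap.id) with hK
  constructor
  · intro H
    have hvK : v ∈ K := (hker v).mpr hvA
    have h1 : 0 < Module.finrank ℝ K := by
      rw [Module.finrank_pos_iff_exists_ne_zero]
      exact ⟨⟨v, hvK⟩, by simp [Submodule.mk_eq_zero, hv0]⟩
    by_contra hne
    have h2 : 2 ≤ Module.finrank ℝ K := by omega
    set φ : K →ₗ[ℝ] ℝ :=
      { toFun := fun w => (w : Fin n → ℝ) ⬝ᵥ v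
        map_add' := fun a b => by simp [add_dotProduct]
        map_smul' := fun c a => by simp [smul_dotProduct] } with hφ
    have hkr : 0 < Module.finrank ℝ (LinearMap.ker φ) := by
      have hrn := LinearMap.finrank_range_add_finrank_ker φ
      have hr : Module.finrank ℝ (LinearMap.range φ) ≤ 1 :=
        (Submodule.finrank_le _).trans (le_of_eq (Module.finrank_self ℝ))
      omega
    obtain ⟨u0, hu0ne⟩ := (Module.finrank_pos_iff_exists_ne_zero (R := ℝ) (M := LinearMap.ker φ)).mp hkr
    set u : Fin n → ℝ := ((u0 : K) : Fin n → ℝ) with hu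
    have huK : u ∈ K := (u0 : K).2
    have huv : u ⬝ᵥ v = 0 := u0.2
    have hu0 : u ≠ 0 := by
      intro h
      apply hu0ne
      ext
      exact congrFun h _
    have hupos : 0 < u ⬝ᵥ u := by
      have hnn : 0 ≤ u ⬝ᵥ u :=
        Finset.sum_nonneg fun i _ => mul_self_nonneg (u i)
      rcases lt_or_eq_of_le hnn with h | h
      · exact h
      · exact absurd (dotProduct_self_eq_zero.mp h.symm) hu0
    set c : ℝ := Real.sqrt (u ⬝ᵥ u) with hc
    have hcpos : 0 < c := Real.sqrt_pos.mpr hupos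
    set u' : Fin n → ℝ := c⁻¹ • u with hu'
    have hu'1 : u' ⬝ᵥ u' = 1 := by
      rw [hu', smul_dotProduct, dotProduct_smul, smul_eq_mul, smul_eq_mul,
        ← mul_assoc]
      have hcc : c * c = u ⬝ᵥ u := Real.mul_self_sqrt hupos.le
      rw [← hcc]
      field_simp
    have hu'v : u' ⬝ᵥ v = 0 := by rw [hu', smul_dotProduct, huv, smul_zero]
    have hnecv : ∀ w : Fin n → ℝ, w ⬝ᵥ w = 1 → w ⬝ᵥ v = 0 → lam1 ≤ w ⬝ᵥ A *ᵥ w := by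
      intro w hw _
      have := hray w
      rw [hw, mul_one] at this
      exact this
    have hlt := H v lam1 hv1 hvA hnecv u' hu'1 hu'v
    have hu'K : u' ∈ K := K.smul_mem _ huK
    have hu'A : A *ᵥ u' = lam1 • u' := (hker u').mp hu'K
    rw [hu'A, dotProduct_smul, smul_eq_mul, hu'1, mul_one] at hlt
    exact lt_irrefl _ hlt
  · intro hdim x lam hx hAx hnec u hu hux
    have hx0 : x ≠ 0 := by intro h; rw [h] at hx; simp at hx
    have hlam : lam = lam1 := by
      by_contra hne
      have hvx : v ⬝ᵥ x = 0 := by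
        have h1 : v ⬝ᵥ A *ᵥ x = lam * (v ⬝ᵥ x) := by
          rw [hAx, dotProduct_smul, smul_eq_mul]
        have h2 : v ⬝ᵥ A *ᵥ x = lam1 * (v ⬝ᵥ x) := by
          rw [dotProduct_mulVec, ← Matrix.mulVec_transpose, hA.eq, hvA,
            smul_dotProduct, smul_eq_mul]
        have h3 : (lam - lam1) * (v ⬝ᵥ x) = 0 := by linarith [h1, h2]
        rcases mul_eq_zero.mp h3 with h | h
        · exact absurd (by linarith : lam = lam1) hne
        · exact h
      have h4 := hnec v hv1 hvx
      have hvAv : v ⬝ᵥ A *ᵥ v = lam1 := by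
        rw [hvA, dotProduct_smul, smul_eq_mul, hv1, mul_one]
      have h5 := hmin lam x hx0 hAx
      rw [hvAv] at h4
      have : lam = lam1 := le_antisymm h4 h5
      exact hne this
    rw [hlam] at hAx hnec ⊢
    have hge := hray u
    rw [hu, mul_one] at hge
    rcases lt_or_eq_of_le hge with h | h
    · exact h
    · exfalso
      have huA : A *ᵥ u = lam1 • u := heq0 u (by rw [hu, mul_one]; exact h.symm)
      have huK : u ∈ K := (hker u).mpr huA
      have hxK : x ∈ K := (hker x).mpr hAx
      have hspan : Submodule.span ℝ {x} ≤ K := by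
        rw [Submodule.span_le]; simpa using hxK
      have hspaneq : Submodule.span ℝ {x} = K :=
        Submodule.eq_of_le_of_finrank_le hspan
          (by rw [hdim, finrank_span_singleton hx0])
      obtain ⟨d, hd⟩ := Submodule.mem_span_singleton.mp (hspaneq ▸ huK)
      have hd0 : d = 0 := by
        have : u ⬝ᵥ x = d * (x ⬝ᵥ x) := by
          rw [← hd, smul_dotProduct, smul_eq_mul]
        rw [hux, hx, mul_one] at this
        exact this.symm
      rw [hd0, zero_smul] at hd
      rw [← hd] at hu
      simp at hu
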